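/- For the purely nonlinear oscillator ẍ + c²·sgn(x)·|x|^α = 0 with initial conditions x(0) = q₀ > 0, ẋ(0) = 0, the period given by T = (4√2/(c√(α+1)))·q₀^((1-α)/2)·∫₀^{π/2}(sin θ)^((1-α)/(1+α)) dθ equals √(8π/(c²(α+1)))·(Γ(1/(α+1))/Γ((α+3)/(2(α+1))))·q₀^((1-α)/2). -/

import Mathlib

open Real MeasureTheory Set intervalIntegral

lemma beta_integrable_aux {u v : ℝ} (hu : 0 < u) :
    IntervalIntegrable (fun x : ℝ => x ^ (u - 1) * (1 - x) ^ (v - 1)) volume 0 (1/2) := by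
  apply IntervalIntegrable.mul_continuousOn
  · exact intervalIntegrable_rpow' (by linarith)
  · apply ContinuousOn.rpow_const (by fun_prop)
    intro x hx
    rw [uIcc_of_le (by norm_num : (0:ℝ) ≤ 1/2)] at hx
    left; intro h; nlinarith [hx.2]

lemma beta_integrable {u v : ℝ} (hu : 0 < u) (hv : 0 < v) :
    IntervalIntegrable (fun x : ℝ => x ^ (u - 1) * (1 - x) ^ (v - 1)) volume 0 1 := by
  refine (beta_integrable_aux hu).trans ?_
  have h := ((beta_integrable_aux (v := u) hv).comp_sub_left 1)
  norm_num at h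
  have : (fun x : ℝ => (1 - x) ^ (v - 1) * x ^ (u - 1))
      = fun x : ℝ => x ^ (u - 1) * (1 - x) ^ (v - 1) := by
    funext x; ring
  rw [this] at h
  exact h.symm

lemma beta_real {u v : ℝ} (hu : 0 < u) (hv : 0 < v) :
    ∫ x in (0:ℝ)..1, x ^ (u - 1) * (1 - x) ^ (v - 1)
      = Real.Gamma u * Real.Gamma v / Real.Gamma (u + v) := by
  have key : Complex.betaIntegral u v
      = ((∫ x in (0:ℝ)..1, x ^ (u - 1) * (1 - x) ^ (v - 1) : ℝ) : ℂ) := by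
    rw [Complex.betaIntegral, ← intervalIntegral.integral_ofReal]
    refine intervalIntegral.integral_congr fun x hx => ?_
    rw [uIcc_of_le (by norm_num : (0:ℝ) ≤ 1)] at hx
    push_cast
    rw [Complex.ofReal_cpow hx.1, Complex.ofReal_cpow (by linarith [hx.2] : (0:ℝ) ≤ 1 - x)]
    push_cast
    ring
  have h := Complex.Gamma_mul_Gamma_eq_betaIntegral
    (s := (u:ℂ)) (t := (v:ℂ)) (by simpa using hu) (by simpa using hv)
  rw [key] at h
  have h2 : (u:ℂ) + (v:ℂ) = ((u + v : ℝ) : ℂ) := by push_cast; ring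
  rw [h2, Complex.Gamma_ofReal, Complex.Gamma_ofReal, Complex.Gamma_ofReal] at h
  have h3 : Real.Gamma u * Real.Gamma v
      = Real.Gamma (u + v) * ∫ x in (0:ℝ)..1, x ^ (u - 1) * (1 - x) ^ (v - 1) := by
    exact_mod_cast h
  rw [eq_div_iff (Real.Gamma_pos_of_pos (by linarith)).ne']
  linarith [h3]

lemma sin_rpow_integrable {p : ℝ} (hp : -1 < p) :
    IntervalIntegrable (fun θ : ℝ => Real.sin θ ^ p) volume 0 (π/2) := by
  rcases le_or_gt 0 p with h | h
  · exact (Real.continuous_sin.rpow_const fun x => Or.inr h).intervalIntegrable _ _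
  · have hbase : IntervalIntegrable (fun θ : ℝ => (2/π) ^ p * θ ^ p) volume 0 (π/2) :=
      (intervalIntegrable_rpow' hp).const_mul _
    refine hbase.mono_fun ((by measurability : Measurable fun θ : ℝ => Real.sin θ ^ p)).aestronglyMeasurable ?_
    rw [Set.uIoc_of_le (by positivity : (0:ℝ) ≤ π/2)]
    filter_upwards [ae_restrict_mem measurableSet_Ioc] with θ hθ
    have h1 : 0 < 2 / π * θ := mul_pos (div_pos two_pos Real.pi_pos) hθ.1
    have h2 : 2 / π * θ ≤ Real.sin θ := Real.mul_le_sin hθ.1.le hθ.2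
    have h3 : Real.sin θ ^ p ≤ (2 / π * θ) ^ p :=
      Real.rpow_le_rpow_of_nonpos h1 h2 h.le
    rw [Real.mul_rpow (by positivity) hθ.1.le] at h3
    rw [Real.norm_eq_abs, Real.norm_eq_abs,
      abs_of_nonneg (Real.rpow_nonneg (Real.sin_nonneg_of_nonneg_of_le_pi hθ.1.le
        (by linarith [Real.pi_pos, hθ.2])) p),
      abs_of_nonneg (mul_nonneg (Real.rpow_nonneg (div_pos two_pos Real.pi_pos).le p) (Real.rpow_nonneg hθ.1.le p))]
    exact h3

lemma key_comp {p : ℝ} {θ : ℝ} (hθ : θ ∈ Ioo 0 (π/2)) :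
    (2 * Real.sin θ ^ 1 * Real.cos θ) •
      ((Real.sin θ ^ 2) ^ ((p+1)/2 - 1) * (1 - Real.sin θ ^ 2) ^ ((1:ℝ)/2 - 1))
      = 2 * Real.sin θ ^ p := by
  have hs : 0 < Real.sin θ :=
    Real.sin_pos_of_pos_of_lt_pi hθ.1 (by linarith [Real.pi_pos, hθ.2])
  have hc : 0 < Real.cos θ :=
    Real.cos_pos_of_mem_Ioo ⟨by linarith [Real.pi_pos, hθ.1], hθ.2⟩
  have e0 : (1 : ℝ) - Real.sin θ ^ 2 = Real.cos θ ^ 2 := (Real.cos_sq' θ).symm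
  have e1 : (Real.sin θ ^ 2 : ℝ) ^ ((p+1)/2 - 1) = Real.sin θ ^ (p - 1) := by
    rw [← Real.rpow_natCast (Real.sin θ) 2, ← Real.rpow_mul hs.le]
    congr 1; push_cast; ring
  have e2 : (Real.cos θ ^ 2 : ℝ) ^ ((1:ℝ)/2 - 1) = (Real.cos θ) ^ (-1 : ℝ) := by
    rw [← Real.rpow_natCast (Real.cos θ) 2, ← Real.rpow_mul hc.le]
    congr 1; push_cast; ring
  rw [smul_eq_mul, pow_one, e0, e1, e2, Real.rpow_neg_one]
  have e3 : Real.sin θ * Real.sin θ ^ (p - 1) = Real.sin θ ^ p := by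
    nth_rewrite 1 [← Real.rpow_one (Real.sin θ)]
    rw [← Real.rpow_add hs]; norm_num
  calc 2 * Real.sin θ * Real.cos θ * (Real.sin θ ^ (p-1) * (Real.cos θ)⁻¹)
      = 2 * (Real.sin θ * Real.sin θ ^ (p-1)) * (Real.cos θ * (Real.cos θ)⁻¹) := by ring
    _ = 2 * Real.sin θ ^ p := by rw [e3, mul_inv_cancel₀ hc.ne', mul_one]

lemma sin_rpow_integral {p : ℝ} (hp : -1 < p) :
    ∫ θ in (0:ℝ)..(π/2), Real.sin θ ^ p
      = Real.Gamma ((p+1)/2) * Real.sqrt π / (2 * Real.Gamma (p/2 + 1)) := by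
  have h0pi : (0:ℝ) ≤ π/2 := by positivity
  have hu : 0 < (p+1)/2 := by linarith
  set g : ℝ → ℝ := fun x => x ^ ((p+1)/2 - 1) * (1 - x) ^ ((1:ℝ)/2 - 1) with hg
  have hsub : ∀ θ ∈ Ioo (0:ℝ) (π/2), Real.sin θ ^ 2 ∈ Ioo (0:ℝ) 1 := by
    intro θ hθ
    have hs : 0 < Real.sin θ :=
      Real.sin_pos_of_pos_of_lt_pi hθ.1 (by linarith [Real.pi_pos, hθ.2])
    have hs1 : Real.sin θ < 1 := by
      have := Real.cos_pos_of_mem_Ioo ⟨by linarith [Real.pi_pos, hθ.1], hθ.2⟩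
      nlinarith [Real.sin_sq_add_cos_sq θ]
    exact ⟨by positivity, by nlinarith⟩
  have hmain : (∫ θ in (0:ℝ)..(π/2),
        (2 * Real.sin θ ^ 1 * Real.cos θ) • (g ∘ fun θ => Real.sin θ ^ 2) θ)
      = ∫ x in (Real.sin 0 ^ 2)..(Real.sin (π/2) ^ 2), g x := by
    apply intervalIntegral.integral_comp_smul_deriv''' (f := fun θ => Real.sin θ ^ 2)
    · exact (Real.continuous_sin.pow 2).continuousOn
    · intro x hx
      rw [min_eq_left h0pi, max_eq_right h0pi] at hx
      exact (((Real.hasDerivAt_sin x).pow 2)).hasDerivWithinAt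
    · rw [min_eq_left h0pi, max_eq_right h0pi]
      refine ContinuousOn.mono (s := Ioo (0:ℝ) 1) ?_ (fun y hy => ?_)
      · exact ((continuousOn_id.rpow_const fun x hx => Or.inl hx.1.ne').mul
          ((continuousOn_const.sub continuousOn_id).rpow_const fun x hx =>
            Or.inl (sub_ne_zero_of_ne hx.2.ne')) :
          ContinuousOn g (Ioo 0 1))
      · obtain ⟨θ, hθ, rfl⟩ := hy
        exact hsub θ hθ
    · refine (((intervalIntegrable_iff').mp (beta_integrable hu (by norm_num : (0:ℝ) < 1/2))).mono_set ?_)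
      rw [uIcc_of_le (by norm_num : (0:ℝ) ≤ 1), uIcc_of_le h0pi]
      rintro y ⟨θ, hθ, rfl⟩
      refine ⟨sq_nonneg _, ?_⟩
      show Real.sin θ ^ 2 ≤ 1
      nlinarith [Real.neg_one_le_sin θ, Real.sin_le_one θ]
    · rw [uIcc_of_le h0pi, integrableOn_Icc_iff_integrableOn_Ioo]
      have hint : IntegrableOn (fun θ => 2 * Real.sin θ ^ p) (Ioo (0:ℝ) (π/2)) volume := by
        have h2 := (sin_rpow_integrable hp).const_mul 2
        rw [intervalIntegrable_iff', uIcc_of_le h0pi,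
          integrableOn_Icc_iff_integrableOn_Ioo] at h2
        exact h2
      refine hint.congr ?_
      filter_upwards [ae_restrict_mem measurableSet_Ioo] with θ hθ
      exact (key_comp hθ).symm
  rw [Real.sin_zero, Real.sin_pi_div_two, one_pow,
    show (0:ℝ)^2 = 0 by norm_num] at hmain
  have hB : (∫ x in (0:ℝ)..1, g x)
      = Real.Gamma ((p+1)/2) * Real.Gamma (1/2) / Real.Gamma ((p+1)/2 + 1/2) := by
    have := beta_real hu (by norm_num : (0:ℝ) < 1/2)
    simpa [hg] using this
  have hL : (∫ θ in (0:ℝ)..(π/2),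
        (2 * Real.sin θ ^ 1 * Real.cos θ) • (g ∘ fun θ => Real.sin θ ^ 2) θ)
      = 2 * ∫ θ in (0:ℝ)..(π/2), Real.sin θ ^ p := by
    rw [← intervalIntegral.integral_const_mul]
    apply intervalIntegral.integral_congr_ae
    have hnull : (volume : Measure ℝ) {π/2} = 0 := Real.volume_singleton
    filter_upwards [compl_mem_ae_iff.mpr hnull] with θ hne hθ
    rw [uIoc_of_le h0pi] at hθ
    have hθ' : θ ∈ Ioo (0:ℝ) (π/2) := ⟨hθ.1, lt_of_le_of_ne hθ.2 hne⟩
    exact key_comp hθ'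
  have hΓ : Real.Gamma (1/2) = Real.sqrt π := Real.Gamma_one_half_eq
  have harg : (p+1)/2 + 1/2 = p/2 + 1 := by ring
  rw [hL, hB, hΓ, harg] at hmain
  have hBpos : 0 < Real.Gamma (p/2 + 1) := Real.Gamma_pos_of_pos (by linarith)
  rw [eq_div_iff hBpos.ne'] at hmain
  rw [eq_div_iff (by positivity : (2 * Real.Gamma (p/2 + 1)) ≠ 0)]
  linear_combination hmain

theorem stmt4 (c α q₀ : ℝ) (hc : 0 < c) (hα : 0 < α) (hq : 0 < q₀) :
    (4 * Real.sqrt 2 / (c * Real.sqrt (α + 1))) * q₀ ^ ((1 - α) / 2) *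
        ∫ θ in (0:ℝ)..(π / 2), (Real.sin θ) ^ ((1 - α) / (1 + α)) =
      Real.sqrt (8 * π / (c ^ 2 * (α + 1))) *
        (Real.Gamma (1 / (α + 1)) / Real.Gamma ((α + 3) / (2 * (α + 1)))) *
        q₀ ^ ((1 - α) / 2) := by
  have h1α : (0:ℝ) < 1 + α := by linarith
  have hp : (-1 : ℝ) < (1 - α) / (1 + α) := by
    rw [lt_div_iff₀ h1α]; linarith
  have hint := sin_rpow_integral hp
  have e1 : ((1 - α) / (1 + α) + 1) / 2 = 1 / (α + 1) := by
    field_simp; ring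
  have e2 : (1 - α) / (1 + α) / 2 + 1 = (α + 3) / (2 * (α + 1)) := by
    field_simp; ring
  rw [e1, e2] at hint
  have esq : (2 * Real.sqrt 2 * Real.sqrt π / (c * Real.sqrt (α + 1))) ^ 2
      = 8 * π / (c ^ 2 * (α + 1)) := by
    rw [div_pow, mul_pow, mul_pow, mul_pow, Real.sq_sqrt (by norm_num : (0:ℝ) ≤ 2),
      Real.sq_sqrt Real.pi_pos.le, Real.sq_sqrt (by linarith : (0:ℝ) ≤ α + 1)]
    norm_num
  have hco : Real.sqrt (8 * π / (c ^ 2 * (α + 1)))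
      = 2 * Real.sqrt 2 * Real.sqrt π / (c * Real.sqrt (α + 1)) := by
    rw [← esq, Real.sqrt_sq (by positivity)]
  rw [hint, hco]
  have hΓ2 : 0 < Real.Gamma ((α + 3) / (2 * (α + 1))) :=
    Real.Gamma_pos_of_pos (by positivity)
  have hs : Real.sqrt (α + 1) ≠ 0 := by positivity
  field_simp
  ring
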